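/- Let n ≥ 1 and μ1 ∈ ℝ with n+μ1 > 1, and let δ ≥ 0 with √δ < 2n+μ1−1 (equivalently n+κ > 0). Then: (i) p_F(n+κ) ≤ p_S(n+μ1) if and only if √δ ≤ n − d_*(n+μ1); (ii) p_F(n+κ) = p_S(n+μ1) if and only if √δ = n − d_*(n+μ1); and (iii) when √δ = n − d_*(n+μ1), both p_F(n+κ) and p_S(n+μ1) are equal to 2/(n−√δ). -/
import Mathlib


/-- Fujita exponent `p_F(ν) = 1 + 2/ν` (as a real number; meaningful for `ν > 0`). -/
noncomputable def pF (ν : ℝ) : ℝ := 1 + 2 / ν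

/-- Strauss exponent `p_S(ν)` (as a real number; meaningful for `ν > 1`). -/
noncomputable def pS (ν : ℝ) : ℝ :=
  (ν + 1 + Real.sqrt (ν ^ 2 + 10 * ν - 7)) / (2 * (ν - 1))

/-- `d_*(ν)`: zero for `ν ≤ 1`, and `(−1−ν+√(ν²+10ν−7))/2` for `ν > 1`. -/
noncomputable def dStar (ν : ℝ) : ℝ :=
  if 1 < ν then (-1 - ν + Real.sqrt (ν ^ 2 + 10 * ν - 7)) / 2 else 0

/-- Comparison of the shifted Fujita and Strauss exponents via `d_*`. -/
theorem pF_pS_comparison (n μ1 δ : ℝ) (hn : 1 ≤ n) (hnμ : 1 < n + μ1)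
    (hδ : 0 ≤ δ) (hδ' : Real.sqrt δ < 2 * n + μ1 - 1) :
    (pF (n + (μ1 - 1 - Real.sqrt δ) / 2) ≤ pS (n + μ1) ↔
      Real.sqrt δ ≤ n - dStar (n + μ1)) ∧
    (pF (n + (μ1 - 1 - Real.sqrt δ) / 2) = pS (n + μ1) ↔
      Real.sqrt δ = n - dStar (n + μ1)) ∧
    (Real.sqrt δ = n - dStar (n + μ1) →
      pF (n + (μ1 - 1 - Real.sqrt δ) / 2) = 2 / (n - Real.sqrt δ) ∧
      pS (n + μ1) = 2 / (n - Real.sqrt δ)) := by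

  have hs0 : 0 ≤ Real.sqrt δ := Real.sqrt_nonneg δ
  set s := Real.sqrt δ with hsdef
  have hA : 0 < 2 * n + μ1 - 1 - s := by linarith
  have hval : (0:ℝ) ≤ (n + μ1) ^ 2 + 10 * (n + μ1) - 7 := by nlinarith
  set R := Real.sqrt ((n + μ1) ^ 2 + 10 * (n + μ1) - 7) with hRdef
  have hR2 : R ^ 2 = (n + μ1) ^ 2 + 10 * (n + μ1) - 7 := Real.sq_sqrt hval
  have hR0 : 0 ≤ R := Real.sqrt_nonneg _
  have hR1 : n + μ1 + 1 < R := by nlinarith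
  have h2ν : (0:ℝ) < 2 * (n + μ1 - 1) := by linarith
  have hd : dStar (n + μ1) = (-1 - (n + μ1) + R) / 2 := by
    rw [dStar, if_pos hnμ, hRdef]
  have hpS : pS (n + μ1) = (n + μ1 + 1 + R) / (2 * (n + μ1 - 1)) := by
    rw [pS, hRdef]
  have hpF : pF (n + (μ1 - 1 - s) / 2)
      = (2 * n + μ1 - 1 - s + 4) / (2 * n + μ1 - 1 - s) := by
    rw [pF, show n + (μ1 - 1 - s) / 2 = (2 * n + μ1 - 1 - s) / 2 by ring]
    field_simp
    ring
  have hB : (0:ℝ) < R - (n + μ1) + 3 := by linarith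
  have iff1 : pF (n + (μ1 - 1 - s) / 2) ≤ pS (n + μ1) ↔ s ≤ n - dStar (n + μ1) := by
    rw [hpF, hpS, hd, div_le_div_iff₀ hA h2ν]
    constructor
    · intro h; nlinarith [hR2, hB, mul_pos hA hB]
    · intro h
      nlinarith [hR2, mul_nonneg
        (show (0:ℝ) ≤ 2 * (2 * n + μ1 - 1 - s) - (R + (n + μ1) - 3) by linarith)
        hB.le]
  have iff1' : pS (n + μ1) ≤ pF (n + (μ1 - 1 - s) / 2) ↔ n - dStar (n + μ1) ≤ s := by
    rw [hpF, hpS, hd, div_le_div_iff₀ h2ν hA]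
    constructor
    · intro h; nlinarith [hR2, hB, mul_pos hA hB]
    · intro h
      nlinarith [hR2, mul_nonneg
        (show (0:ℝ) ≤ (R + (n + μ1) - 3) - 2 * (2 * n + μ1 - 1 - s) by linarith)
        hB.le]
  refine ⟨iff1, ⟨fun h => le_antisymm (iff1.mp h.le) (iff1'.mp h.ge),
    fun h => le_antisymm (iff1.mpr h.le) (iff1'.mpr h.ge)⟩, fun h => ?_⟩
  have hsv : s = (3 * n + μ1 + 1 - R) / 2 := by rw [h, hd]; ring
  have hns : n - s = (R - (n + μ1) - 1) / 2 := by rw [hsv]; ring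
  have hA' : 2 * n + μ1 - 1 - s = ((n + μ1) - 3 + R) / 2 := by rw [hsv]; ring
  have hx : (0:ℝ) < (n + μ1) - 3 + R := by linarith
  have hy : (0:ℝ) < R - (n + μ1) - 1 := by linarith
  constructor
  · rw [hpF, hA', hns, div_eq_div_iff (by positivity) (by positivity)]
    linear_combination (1/4) * hR2
  · rw [hpS, hns, div_eq_div_iff (by positivity) (by positivity)]
    linear_combination (1/2) * hR2
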